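/- Let (z_n)_{n≥1} be a sequence of positive real numbers with ∑_{n=1}^∞ 1/z_n < ∞, let f : ℂ → ℂ be the entire function f(z) = ∏_{n=1}^∞ (1 + z/z_n), and let g = f'/f be the logarithmic derivative of f, which is analytic on the half-plane Re z > 0. Then for every integer n ≥ 0 and every complex z = x + i y with x > 0, |g^{(n)}(z)| ≤ (-1)^n g^{(n)}(x), where g^{(n)} denotes the n-th complex derivative of g. -/

import Mathlib

open MeasureTheory Real Set

namespace Stmt13Aux

open Complex Filter Topology

variable {z : ℕ → ℝ}

lemma abs_lower (hz : ∀ n, 0 < z n) (s : ℂ) (n : ℕ) :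
    s.re + z n ≤ ‖s + z n‖ := by
  have h := Complex.re_le_norm (s + z n)
  simpa using h

lemma ne_zero_shift (hz : ∀ n, 0 < z n) {s : ℂ} (hs : 0 < s.re) (n : ℕ) :
    s + (z n : ℂ) ≠ 0 := by
  intro h
  have h2 : (s + (z n : ℂ)).re = 0 := by rw [h]; simp
  simp only [Complex.add_re, Complex.ofReal_re] at h2
  nlinarith [hz n]

lemma inv_pow_bound (hz : ∀ n, 0 < z n) (k : ℕ) {ε : ℝ} (hε : 0 < ε) {s : ℂ}
    (hs : ε ≤ s.re) (n : ℕ) :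
    ‖((s + z n)⁻¹) ^ (k + 1)‖ ≤ ε⁻¹ ^ k * (z n)⁻¹ := by
  have hA : s.re + z n ≤ ‖s + z n‖ := abs_lower hz s n
  have hε' : ε ≤ ‖s + z n‖ := le_trans (by nlinarith [hz n]) hA
  have hzn : z n ≤ ‖s + z n‖ := le_trans (by nlinarith) hA
  have h1 : ε ^ k * z n ≤ ‖s + z n‖ ^ (k + 1) := by
    calc ε ^ k * z n ≤ ‖s + z n‖ ^ k * ‖s + z n‖ :=
          mul_le_mul (pow_le_pow_left₀ hε.le hε' k) hzn (hz n).le (by positivity)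
      _ = ‖s + z n‖ ^ (k + 1) := by ring
  have h2 : ‖((s + z n)⁻¹) ^ (k + 1)‖ = (‖s + z n‖ ^ (k + 1))⁻¹ := by
    rw [norm_pow, norm_inv, inv_pow]
  rw [h2]
  have h3 : ε⁻¹ ^ k * (z n)⁻¹ = (ε ^ k * z n)⁻¹ := by
    rw [mul_inv, inv_pow]
  rw [h3]
  have hzn := hz n
  exact inv_anti₀ (by positivity) h1

lemma summable_z_inv (hsum : Summable fun n => 1 / z n) : Summable fun n => (z n)⁻¹ := by
  simpa [one_div] using hsum

lemma summable_inv_pow (hz : ∀ n, 0 < z n) (hsum : Summable fun n => 1 / z n)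
    (k : ℕ) {s : ℂ} (hs : 0 < s.re) :
    Summable fun n => ((s + z n)⁻¹) ^ (k + 1) := by
  apply Summable.of_norm_bounded (g := fun n => s.re⁻¹ ^ k * (z n)⁻¹)
    (((summable_z_inv hsum).mul_left _))
  exact fun n => inv_pow_bound hz k hs le_rfl n

lemma hasDerivAt_term (hz : ∀ n, 0 < z n) (k : ℕ) (n : ℕ) {s : ℂ} (hs : 0 < s.re) :
    HasDerivAt (fun w : ℂ => ((w + z n)⁻¹) ^ (k + 1))
      (-(k + 1 : ℂ) * ((s + z n)⁻¹) ^ (k + 2)) s := by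
  have h0 : s + (z n : ℂ) ≠ 0 := ne_zero_shift hz hs n
  have h1 : HasDerivAt (fun w : ℂ => w + (z n : ℂ)) 1 s := (hasDerivAt_id s).add_const _
  have h2 : HasDerivAt (fun w : ℂ => (w + z n)⁻¹) (-1 / (s + z n) ^ 2) s := h1.inv h0
  have h3 := h2.fun_pow (k + 1)
  refine h3.congr_deriv ?_
  have hk : (k + 1 : ℕ) - 1 = k := rfl
  rw [hk]
  have ht2 : (-1 : ℂ) / (s + z n) ^ 2 = -((s + z n)⁻¹) ^ 2 := by
    rw [neg_div, one_div, inv_pow]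
  rw [ht2]
  push_cast
  ring

lemma hasDerivAt_T (hz : ∀ n, 0 < z n) (hsum : Summable fun n => 1 / z n) (k : ℕ)
    {s : ℂ} (hs : 0 < s.re) :
    HasDerivAt (fun w : ℂ => ∑' n, ((w + z n)⁻¹) ^ (k + 1))
      (∑' n, -(k + 1 : ℂ) * ((s + z n)⁻¹) ^ (k + 2)) s := by
  set ε : ℝ := s.re / 2 with hεdef
  have hε : 0 < ε := by positivity
  have ht : IsOpen {w : ℂ | ε < w.re} := isOpen_lt continuous_const Complex.continuous_re
  have htc : IsPreconnected {w : ℂ | ε < w.re} := (convex_halfSpace_re_gt ε).isPreconnected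
  refine hasDerivAt_tsum_of_isPreconnected
    (u := fun n => (k + 1 : ℝ) * (ε⁻¹ ^ (k + 1) * (z n)⁻¹))
    (((((summable_z_inv hsum).mul_left _)).mul_left _)) ht htc
    (fun n w hw => hasDerivAt_term hz k n (lt_trans hε hw)) ?_
    (show s ∈ {w : ℂ | ε < w.re} by simp only [mem_setOf_eq, hεdef]; linarith)
    (summable_inv_pow hz hsum k hs)
    (show s ∈ {w : ℂ | ε < w.re} by simp only [mem_setOf_eq, hεdef]; linarith)
  intro n w hw
  have hb := inv_pow_bound hz (k + 1) hε (le_of_lt hw) n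
  calc ‖-(k + 1 : ℂ) * ((w + z n)⁻¹) ^ (k + 2)‖
      = (k + 1 : ℝ) * ‖((w + z n)⁻¹) ^ ((k + 1) + 1)‖ := by
        rw [norm_mul, norm_neg]
        congr 1
        simpa using Complex.norm_natCast (k + 1)
    _ ≤ (k + 1 : ℝ) * (ε⁻¹ ^ (k + 1) * (z n)⁻¹) := by
        have : (0:ℝ) ≤ (k + 1 : ℝ) := by positivity
        exact mul_le_mul_of_nonneg_left hb this

lemma iteratedDeriv_G (hz : ∀ n, 0 < z n) (hsum : Summable fun n => 1 / z n) (k : ℕ)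
    {s : ℂ} (hs : 0 < s.re) :
    iteratedDeriv k (fun w : ℂ => ∑' n, (w + z n)⁻¹) s
      = (-1) ^ k * (k.factorial : ℂ) * ∑' n, ((s + z n)⁻¹) ^ (k + 1) := by
  induction k generalizing s with
  | zero => simp
  | succ k ih =>
    rw [iteratedDeriv_succ]
    have hev : iteratedDeriv k (fun w : ℂ => ∑' n, (w + z n)⁻¹)
        =ᶠ[𝓝 s] fun w => (-1) ^ k * (k.factorial : ℂ) * ∑' n, ((w + z n)⁻¹) ^ (k + 1) := by
      filter_upwards [(isOpen_lt continuous_const Complex.continuous_re).mem_nhds hs] with w hw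
      exact ih hw
    rw [hev.deriv_eq]
    have hT := (hasDerivAt_T hz hsum k hs).const_mul ((-1 : ℂ) ^ k * (k.factorial : ℂ))
    rw [hT.deriv]
    rw [tsum_mul_left]
    rw [Nat.factorial_succ]
    push_cast
    ring

lemma one_add_mem (hz : ∀ n, 0 < z n) {s : ℂ} (hs : 0 < s.re) (n : ℕ) :
    1 + s / (z n : ℂ) ∈ Complex.slitPlane := by
  rw [Complex.mem_slitPlane_iff]
  left
  have : (1 + s / (z n : ℂ)).re = 1 + s.re / z n := by
    simp [Complex.add_re, Complex.div_ofReal_re]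
  rw [this]
  have := hz n
  positivity

lemma summable_log (hz : ∀ n, 0 < z n) (hsum : Summable fun n => 1 / z n) (s : ℂ) :
    Summable fun n => Complex.log (1 + s / (z n : ℂ)) := by
  have h0 : Tendsto (fun n => 1 / z n) atTop (𝓝 0) := hsum.tendsto_atTop_zero
  have hpos : (0 : ℝ) < 1 / (2 * ‖s‖ + 1) := by positivity
  have hev : ∀ᶠ n in atTop, 1 / z n < 1 / (2 * ‖s‖ + 1) := by
    have := h0.eventually (eventually_lt_nhds hpos)
    simpa using this
  apply Summable.of_norm_bounded_eventually_nat
    (g := fun n => 3 / 2 * ‖s‖ * (1 / z n)) ((hsum.mul_left _))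
  filter_upwards [hev] with n hn
  have hzn := hz n
  have habs : ‖s / (z n : ℂ)‖ = ‖s‖ * (1 / z n) := by
    rw [norm_div, Complex.norm_real, Real.norm_eq_abs,
      abs_of_pos hzn]
    ring
  have hle : ‖s / (z n : ℂ)‖ ≤ 1 / 2 := by
    rw [habs]
    by_cases hs0 : ‖s‖ = 0
    · rw [hs0]; norm_num
    · have hspos : 0 < ‖s‖ := lt_of_le_of_ne (norm_nonneg s) (Ne.symm hs0)
      have : ‖s‖ * (1 / z n) ≤ ‖s‖ * (1 / (2 * ‖s‖ + 1)) :=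
        mul_le_mul_of_nonneg_left hn.le hspos.le
      calc ‖s‖ * (1 / z n) ≤ ‖s‖ * (1 / (2 * ‖s‖ + 1)) := this
        _ ≤ 1 / 2 := by
            rw [mul_one_div, div_le_div_iff₀ (by positivity) (by norm_num)]
            nlinarith
  calc ‖Complex.log (1 + s / (z n : ℂ))‖ ≤ 3 / 2 * ‖s / (z n : ℂ)‖ :=
        Complex.norm_log_one_add_half_le_self hle
    _ = 3 / 2 * ‖s‖ * (1 / z n) := by rw [habs]; ring

lemma hasDerivAt_L (hz : ∀ n, 0 < z n) (hsum : Summable fun n => 1 / z n)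
    {s : ℂ} (hs : 0 < s.re) :
    HasDerivAt (fun w : ℂ => ∑' n, Complex.log (1 + w / (z n : ℂ)))
      (∑' n, (s + z n)⁻¹) s := by
  have ht : IsOpen {w : ℂ | 0 < w.re} := isOpen_lt continuous_const Complex.continuous_re
  have htc : IsPreconnected {w : ℂ | 0 < w.re} := (convex_halfSpace_re_gt 0).isPreconnected
  refine hasDerivAt_tsum_of_isPreconnected (u := fun n => (z n)⁻¹)
    (summable_z_inv hsum) ht htc
    (g := fun n w => Complex.log (1 + w / (z n : ℂ)))
    (g' := fun n w => (w + z n)⁻¹) ?_ ?_ hs (summable_log hz hsum s) hs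
  · intro n w hw
    have hzn : (z n : ℂ) ≠ 0 := by
      exact_mod_cast (hz n).ne'
    have h1 : HasDerivAt (fun w : ℂ => 1 + w / (z n : ℂ)) ((z n : ℂ)⁻¹) w := by
      simpa [one_div] using ((hasDerivAt_id (𝕜 := ℂ) w).div_const ((z n : ℂ))).const_add 1
    have hmem := one_add_mem hz hw n
    have hne : (1 : ℂ) + w / (z n : ℂ) ≠ 0 := Complex.slitPlane_ne_zero hmem
    have h2 := h1.clog hmem
    refine h2.congr_deriv ?_
    field_simp
    ring
  · intro n w hw
    have hb := inv_pow_bound hz 0 hw (le_refl w.re) n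
    simpa using hb

lemma f_eq_exp (hz : ∀ n, 0 < z n) (hsum : Summable fun n => 1 / z n)
    (f : ℂ → ℂ) (hf : ∀ s : ℂ, f s = ∏' n, (1 + s / (z n : ℂ)))
    {w : ℂ} (hw : 0 < w.re) :
    f w = Complex.exp (∑' n, Complex.log (1 + w / (z n : ℂ))) := by
  rw [hf]
  have hsl := summable_log hz hsum w
  have hcexp : HasProd (Complex.exp ∘ fun n => Complex.log (1 + w / (z n : ℂ)))
      (Complex.exp (∑' n, Complex.log (1 + w / (z n : ℂ)))) := hsl.hasSum.cexp
  have hfun : (Complex.exp ∘ fun n => Complex.log (1 + w / (z n : ℂ)))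
      = fun n => 1 + w / (z n : ℂ) := by
    funext n
    exact Complex.exp_log (Complex.slitPlane_ne_zero (one_add_mem hz hw n))
  rw [hfun] at hcexp
  exact hcexp.tprod_eq

lemma logDeriv_eq (hz : ∀ n, 0 < z n) (hsum : Summable fun n => 1 / z n)
    (f : ℂ → ℂ) (hf : ∀ s : ℂ, f s = ∏' n, (1 + s / (z n : ℂ)))
    {s : ℂ} (hs : 0 < s.re) :
    deriv f s / f s = ∑' n, (s + z n)⁻¹ := by
  have hL := hasDerivAt_L hz hsum hs
  have hD : HasDerivAt (fun w : ℂ => Complex.exp (∑' n, Complex.log (1 + w / (z n : ℂ))))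
      (Complex.exp (∑' n, Complex.log (1 + s / (z n : ℂ))) * ∑' n, (s + z n)⁻¹) s := hL.cexp
  have hev : f =ᶠ[𝓝 s]
      fun w : ℂ => Complex.exp (∑' n, Complex.log (1 + w / (z n : ℂ))) := by
    filter_upwards [(isOpen_lt continuous_const Complex.continuous_re).mem_nhds hs] with w hw
    exact f_eq_exp hz hsum f hf hw
  have hDf : HasDerivAt f
      (Complex.exp (∑' n, Complex.log (1 + s / (z n : ℂ))) * ∑' n, (s + z n)⁻¹) s :=
    hD.congr_of_eventuallyEq hev
  rw [hDf.deriv, f_eq_exp hz hsum f hf hs]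
  rw [mul_comm, mul_div_assoc, div_self (Complex.exp_ne_zero _), mul_one]

end Stmt13Aux

/-- For `f(z) = ∏ (1 + z/zₙ)` with positive `zₙ`, `∑ 1/zₙ < ∞`, and `g = f'/f`
(analytic on `Re z > 0`), for every `n ≥ 0` and every `z = x + iy` with `x > 0`:
`|g^{(n)}(z)| ≤ (-1)^n g^{(n)}(x)`. -/
theorem stmt_13 (z : ℕ → ℝ) (hz : ∀ n, 0 < z n)
    (hsum : Summable fun n => 1 / z n)
    (f : ℂ → ℂ) (hf : ∀ s : ℂ, f s = ∏' n, (1 + s / (z n : ℂ)))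
    (n : ℕ) (s : ℂ) (hs : 0 < s.re) :
    ‖iteratedDeriv n (fun w => deriv f w / f w) s‖
      ≤ ((-1) ^ n * iteratedDeriv n (fun w => deriv f w / f w) ((s.re : ℝ) : ℂ)).re := by
  classical
  have hUopen : IsOpen {w : ℂ | 0 < w.re} := isOpen_lt continuous_const Complex.continuous_re
  have hiter : ∀ w : ℂ, 0 < w.re →
      iteratedDeriv n (fun w => deriv f w / f w) w
        = (-1) ^ n * (n.factorial : ℂ) * ∑' m, ((w + z m)⁻¹) ^ (n + 1) := by
    intro w hw
    have hev : (fun w => deriv f w / f w) =ᶠ[nhds w] fun u : ℂ => ∑' m, (u + z m)⁻¹ := by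
      filter_upwards [hUopen.mem_nhds hw] with u hu
      exact Stmt13Aux.logDeriv_eq hz hsum f hf hu
    rw [hev.iteratedDeriv_eq n]
    exact Stmt13Aux.iteratedDeriv_G hz hsum n hw
  have hx : (0 : ℝ) < ((s.re : ℂ)).re := by simpa using hs
  rw [hiter s hs, hiter _ hx]
  -- real sum
  have hre : ∀ m : ℕ, (((s.re : ℂ) + z m)⁻¹) ^ (n + 1) = ((((s.re + z m)⁻¹) ^ (n + 1) : ℝ) : ℂ) := by
    intro m
    push_cast
    ring
  have hsumR : Summable fun m => ((s.re + z m)⁻¹ : ℝ) ^ (n + 1) := by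
    apply Summable.of_nonneg_of_le
      (fun m => pow_nonneg (inv_nonneg.mpr (by nlinarith [hz m])) _)
      (fun m => ?_) (((Stmt13Aux.summable_z_inv hsum).mul_left (s.re⁻¹ ^ n)))
    have hb := Stmt13Aux.inv_pow_bound hz n (ε := s.re) hs
      (show s.re ≤ ((s.re : ℂ)).re by simp) m
    have h1 : (0 : ℝ) < s.re + z m := by have := hz m; linarith
    calc ((s.re + z m)⁻¹ : ℝ) ^ (n + 1) = ‖((((s.re + z m)⁻¹) ^ (n + 1) : ℝ) : ℂ)‖ := by
          rw [Complex.norm_real, Real.norm_eq_abs, abs_of_nonneg (by positivity)]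
      _ = ‖(((s.re : ℂ) + z m)⁻¹) ^ (n + 1)‖ := by rw [← hre m]
      _ ≤ s.re⁻¹ ^ n * (z m)⁻¹ := hb
  have hRsum_c : (∑' m, (((s.re : ℂ) + z m)⁻¹) ^ (n + 1))
      = ((∑' m, ((s.re + z m)⁻¹ : ℝ) ^ (n + 1) : ℝ) : ℂ) := by
    rw [Complex.ofReal_tsum]
    exact tsum_congr fun m => hre m
  rw [hRsum_c]
  have hRHS : ((-1 : ℂ) ^ n * ((-1) ^ n * (n.factorial : ℂ)
        * ((∑' m, ((s.re + z m)⁻¹ : ℝ) ^ (n + 1) : ℝ) : ℂ))).re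
      = (n.factorial : ℝ) * ∑' m, ((s.re + z m)⁻¹ : ℝ) ^ (n + 1) := by
    rw [← mul_assoc, ← mul_assoc, ← mul_pow]
    norm_num
  rw [hRHS]
  -- summabilities on the complex side
  have hsumC : Summable fun m => ((s + z m)⁻¹) ^ (n + 1) :=
    Stmt13Aux.summable_inv_pow hz hsum n hs
  have hsumN : Summable fun m => ‖((s + z m)⁻¹) ^ (n + 1)‖ := by
    apply Summable.of_nonneg_of_le (fun m => norm_nonneg _)
      (fun m => Stmt13Aux.inv_pow_bound hz n hs le_rfl m)
      (((Stmt13Aux.summable_z_inv hsum).mul_left (s.re⁻¹ ^ n)))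
  -- termwise bound
  have hterm : ∀ m : ℕ, ‖((s + z m)⁻¹) ^ (n + 1)‖ ≤ ((s.re + z m)⁻¹ : ℝ) ^ (n + 1) := by
    intro m
    have hA : s.re + z m ≤ ‖s + z m‖ := Stmt13Aux.abs_lower hz s m
    have hpos : (0 : ℝ) < s.re + z m := by have := hz m; linarith
    rw [norm_pow, norm_inv]
    apply pow_le_pow_left₀ (by positivity)
    exact inv_anti₀ hpos hA
  calc ‖(-1) ^ n * (n.factorial : ℂ) * ∑' m, ((s + z m)⁻¹) ^ (n + 1)‖
      = (n.factorial : ℝ) * ‖∑' m, ((s + z m)⁻¹) ^ (n + 1)‖ := by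
        rw [norm_mul, norm_mul]
        norm_num
    _ ≤ (n.factorial : ℝ) * ∑' m, ‖((s + z m)⁻¹) ^ (n + 1)‖ := by
        apply mul_le_mul_of_nonneg_left (norm_tsum_le_tsum_norm hsumN) (by positivity)
    _ ≤ (n.factorial : ℝ) * ∑' m, ((s.re + z m)⁻¹ : ℝ) ^ (n + 1) := by
        apply mul_le_mul_of_nonneg_left (Summable.tsum_le_tsum hterm hsumN hsumR) (by positivity)
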